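/- Existence of Hepp-sector ultrametrics: For every m ∈ ℕ there exists a constant C ≥ 1 such that for every integer d ≥ 1, every finite set V with |V| = m, and every injective map x : V → ℝ^d, there exists a function ρ : V × V → ℝ satisfying: (i) ρ is symmetric and ρ(v, v) = 0 for all v; (ii) ρ satisfies the ultrametric inequality ρ(u, w) ≤ max(ρ(u, v), ρ(v, w)) for all u, v, w ∈ V; (iii) ρ(v, w) ∈ {2^{−k} : k ∈ ℤ} whenever v ≠ w; and (iv) C^{−1}·ρ(v, w) ≤ ‖x_v − x_w‖ ≤ C·ρ(v, w) for all v ≠ w. The constant C depends only on m, not on d or on the configuration x. -/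

import Mathlib

open List in
lemma hepp_exists_nodup_chain {α : Type*} {r : α → α → Prop} :
    ∀ (n : ℕ) (l : List α), l.length ≤ n → ∀ (v : α), List.Chain r v l →
    ∃ l', List.Chain r v l' ∧ l' ⊆ l ∧ (v :: l').getLast? = (v :: l).getLast? ∧
      (v :: l').Nodup := by
  intro n
  induction n with
  | zero =>
    intro l hl v _
    rw [Nat.le_zero, List.length_eq_zero_iff] at hl
    subst hl
    exact ⟨[], List.Chain.nil, by simp, rfl, by simp⟩
  | succ n ih =>
    intro l hl v hchain
    by_cases hv : v ∈ l
    · obtain ⟨s, t, rfl⟩ := List.append_of_mem hv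
      have hsuffix : (v :: t) <:+ (v :: (s ++ v :: t)) := ⟨v :: s, by simp⟩
      have hchain' : List.Chain r v t :=
        (List.IsChain.suffix (l := v :: (s ++ v :: t)) hchain hsuffix)
      have hlen : t.length ≤ n := by
        have := hl; simp [List.length_append] at this; omega
      obtain ⟨l', h1, h2, h3, h4⟩ := ih t hlen v hchain'
      refine ⟨l', h1, fun a ha => by simp [h2 ha], ?_, h4⟩
      rw [h3]
      have : v :: (s ++ v :: t) = (v :: s) ++ (v :: t) := by simp
      rw [this, List.getLast?_append_of_ne_nil _ (List.cons_ne_nil _ _)]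
    · match l, hl with
      | [], _ => exact ⟨[], List.Chain.nil, by simp, rfl, by simp⟩
      | a :: t, hl =>
        replace hchain := List.isChain_cons_cons.mp hchain
        obtain ⟨hva, hchain⟩ := hchain
        have hlen : t.length ≤ n := by simpa using hl
        obtain ⟨l', h1, h2, h3, h4⟩ := ih t hlen a hchain
        refine ⟨a :: l', (List.isChain_cons_cons.mpr ⟨hva, h1⟩ : List.IsChain r (v :: a :: l')),
          fun b hb => ?_, ?_, ?_⟩
        · rcases List.mem_cons.mp hb with rfl | hb
          · exact List.mem_cons_self
          · exact List.mem_cons_of_mem _ (h2 hb)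
        · rw [List.getLast?_cons_cons, h3, List.getLast?_cons_cons]
        · refine List.nodup_cons.mpr ⟨?_, h4⟩
          intro hmem
          apply hv
          rcases List.mem_cons.mp hmem with rfl | hmem
          · exact List.mem_cons_self
          · exact List.mem_cons_of_mem _ (h2 hmem)

lemma hepp_chain_dist_le {α : Type*} {E : Type*} [SeminormedAddGroup E] (f : α → E)
    {t : ℝ} :
    ∀ (l : List α) (v : α), List.Chain (fun a b => ‖f a - f b‖ ≤ t) v l →
      ‖f v - f ((v :: l).getLast (List.cons_ne_nil _ _))‖ ≤ l.length * t := by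
  intro l
  induction l with
  | nil => intro v _; simp
  | cons a l ih =>
    intro v hchain
    replace hchain := List.isChain_cons_cons.mp hchain
    obtain ⟨hva, hchain⟩ := hchain
    rw [List.getLast_cons_cons]
    calc ‖f v - f ((a :: l).getLast (List.cons_ne_nil _ _))‖
        ≤ ‖f v - f a‖ + ‖f a - f ((a :: l).getLast (List.cons_ne_nil _ _))‖ :=
          norm_sub_le_norm_sub_add_norm_sub _ _ _
      _ ≤ t + l.length * t := add_le_add hva (ih a hchain)
      _ = (a :: l).length * t := by simp [List.length_cons]; ring

/-- Existence of Hepp-sector ultrametrics. -/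
theorem hepp_sector_ultrametric (m : ℕ) :
    ∃ C : ℝ, 1 ≤ C ∧
      ∀ (d : ℕ), 1 ≤ d →
      ∀ (V : Type) (instV : Fintype V), @Fintype.card V instV = m →
      ∀ x : V → EuclideanSpace ℝ (Fin d), Function.Injective x →
      ∃ ρ : V → V → ℝ,
        (∀ v w, ρ v w = ρ w v) ∧
        (∀ v, ρ v v = 0) ∧
        (∀ u v w, ρ u w ≤ max (ρ u v) (ρ v w)) ∧
        (∀ v w, v ≠ w → ∃ k : ℤ, ρ v w = (2 : ℝ) ^ (-k)) ∧
        (∀ v w, v ≠ w →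
          C⁻¹ * ρ v w ≤ ‖x v - x w‖ ∧ ‖x v - x w‖ ≤ C * ρ v w) := by
  classical
  refine ⟨2 * m + 2, by have := Nat.cast_nonneg (α := ℝ) m; linarith, ?_⟩
  intro d _hd V instV hcard x hx
  -- the relation: connected by a chain of steps of norm at most `t`
  set r : ℝ → V → V → Prop := fun t a b => Relation.ReflTransGen (fun c e => ‖x c - x e‖ ≤ t) a b
    with hr
  -- the finite set of candidate thresholds
  set T : Finset ℝ := Finset.image (fun p : V × V => ‖x p.1 - x p.2‖) Finset.univ with hT
  have hmemT : ∀ a b : V, ‖x a - x b‖ ∈ T := fun a b =>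
    Finset.mem_image.mpr ⟨(a, b), Finset.mem_univ _, rfl⟩
  have hTnonneg : ∀ t ∈ T, (0 : ℝ) ≤ t := by
    intro t ht
    obtain ⟨p, -, rfl⟩ := Finset.mem_image.mp ht
    exact norm_nonneg _
  set S : V → V → Finset ℝ := fun v w => T.filter (fun t => r t v w) with hSdef
  have hSne : ∀ v w, (S v w).Nonempty := by
    intro v w
    exact ⟨‖x v - x w‖, Finset.mem_filter.mpr ⟨hmemT v w,
      Relation.ReflTransGen.single le_rfl⟩⟩
  set δ : V → V → ℝ := fun v w => (S v w).min' (hSne v w) with hδdef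
  have hδmem : ∀ v w, δ v w ∈ S v w := fun v w => (S v w).min'_mem (hSne v w)
  have hδle : ∀ v w t, t ∈ S v w → δ v w ≤ t := fun v w t ht => Finset.min'_le _ _ ht
  have hδnonneg : ∀ v w, 0 ≤ δ v w := fun v w =>
    hTnonneg _ (Finset.mem_filter.mp (hδmem v w)).1
  have hδr : ∀ v w, r (δ v w) v w := fun v w => (Finset.mem_filter.mp (hδmem v w)).2
  have hδT : ∀ v w, δ v w ∈ T := fun v w => (Finset.mem_filter.mp (hδmem v w)).1
  have hδ_le_norm : ∀ v w, δ v w ≤ ‖x v - x w‖ := fun v w =>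
    hδle v w _ (Finset.mem_filter.mpr ⟨hmemT v w, Relation.ReflTransGen.single le_rfl⟩)
  -- symmetry
  have hrsymm : ∀ t, Symmetric (r t) := by
    intro t
    suffices hs : Std.Symm (fun c e : V => ‖x c - x e‖ ≤ t) from fun a b h => (Relation.ReflTransGen.stdSymm (r := fun c e : V => ‖x c - x e‖ ≤ t)).symm a b h
    refine ⟨?_⟩
    intro a b hab
    rwa [norm_sub_rev]
  have hδsymm : ∀ v w, δ v w = δ w v := by
    have key : ∀ v w, δ v w ≤ δ w v := by
      intro v w
      exact hδle v w _ (Finset.mem_filter.mpr ⟨hδT w v, hrsymm _ (hδr w v)⟩)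
    exact fun v w => le_antisymm (key v w) (key w v)
  -- diagonal
  have hδdiag : ∀ v, δ v v = 0 := by
    intro v
    refine le_antisymm ?_ (hδnonneg v v)
    have h0 : (0 : ℝ) ∈ S v v := by
      refine Finset.mem_filter.mpr ⟨?_, Relation.ReflTransGen.refl⟩
      simpa using hmemT v v
    exact hδle v v 0 h0
  -- positivity off-diagonal
  have hδpos : ∀ v w, v ≠ w → 0 < δ v w := by
    intro v w hvw
    rcases lt_or_eq_of_le (hδnonneg v w) with h | h
    · exact h
    · exfalso
      apply hvw
      have h0 : r 0 v w := by rw [h]; exact hδr v w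
      have : Relation.ReflTransGen (fun a b : V => a = b) v w := by
        refine Relation.ReflTransGen.mono ?_ v w h0
        intro a b hab
        apply hx
        have : ‖x a - x b‖ = 0 := le_antisymm hab (norm_nonneg _)
        rwa [norm_sub_eq_zero_iff] at this
      rwa [Relation.reflTransGen_eq_self (r := fun a b : V => a = b)] at this
  -- ultrametric inequality for δ
  have hδultra : ∀ u v w, δ u w ≤ max (δ u v) (δ v w) := by
    intro u v w
    set M := max (δ u v) (δ v w) with hM
    have hMT : M ∈ T := by
      rcases max_cases (δ u v) (δ v w) with ⟨h, -⟩ | ⟨h, -⟩ <;> rw [hM, h]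
      exacts [hδT u v, hδT v w]
    have hrM : r M u w := by
      have h1 : r M u v := Relation.ReflTransGen.mono
        (r := fun c e => ‖x c - x e‖ ≤ δ u v) (p := fun c e => ‖x c - x e‖ ≤ M)
        (fun a b hab => le_trans hab (le_max_left _ _)) u v (hδr u v)
      have h2 : r M v w := Relation.ReflTransGen.mono
        (r := fun c e => ‖x c - x e‖ ≤ δ v w) (p := fun c e => ‖x c - x e‖ ≤ M)
        (fun a b hab => le_trans hab (le_max_right _ _)) v w (hδr v w)
      exact h1.trans h2
    exact hδle u w M (Finset.mem_filter.mpr ⟨hMT, hrM⟩)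
  -- chain bound: ‖x v - x w‖ ≤ m * δ v w
  have hchainbound : ∀ v w, ‖x v - x w‖ ≤ m * δ v w := by
    intro v w
    obtain ⟨l, hl, hlast⟩ := List.exists_isChain_cons_of_relationReflTransGen (hδr v w)
    obtain ⟨l', h1, -, h3, h4⟩ :=
      hepp_exists_nodup_chain l.length l le_rfl v hl
    have hlast' : (v :: l').getLast (List.cons_ne_nil _ _) = w := by
      have e1 := List.getLast?_eq_getLast_of_ne_nil (l := v :: l') (List.cons_ne_nil _ _)
      have e2 := List.getLast?_eq_getLast_of_ne_nil (l := v :: l) (List.cons_ne_nil _ _)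
      rw [e1, e2, hlast] at h3
      exact Option.some_injective _ h3
    have hdist := hepp_chain_dist_le x l' v h1
    rw [hlast'] at hdist
    have hlen : (l'.length : ℝ) ≤ m := by
      have := h4.length_le_card
      rw [hcard] at this
      simp only [List.length_cons] at this
      exact_mod_cast Nat.le_of_succ_le this
    calc ‖x v - x w‖ ≤ l'.length * δ v w := hdist
      _ ≤ m * δ v w := mul_le_mul_of_nonneg_right hlen (hδnonneg v w)
  -- define ρ by dyadic rounding
  set ρ : V → V → ℝ := fun v w => if v = w then 0 else (2 : ℝ) ^ (Int.log 2 (δ v w))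
    with hρdef
  have hρnonneg : ∀ v w, 0 ≤ ρ v w := by
    intro v w
    rw [hρdef]
    dsimp only
    split
    · exact le_refl 0
    · positivity
  have hρle : ∀ v w, v ≠ w → ρ v w ≤ δ v w := by
    intro v w hvw
    rw [hρdef]
    dsimp only
    rw [if_neg hvw]
    have := Int.zpow_log_le_self (b := 2) (R := ℝ) one_lt_two (hδpos v w hvw)
    simpa using this
  have hρlt : ∀ v w, v ≠ w → δ v w ≤ 2 * ρ v w := by
    intro v w hvw
    rw [hρdef]
    dsimp only
    rw [if_neg hvw]
    have h := (Int.lt_zpow_succ_log_self (b := 2) (R := ℝ) one_lt_two (δ v w)).le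
    have h2 : ((2:ℕ):ℝ) = 2 := by norm_num
    rw [h2, zpow_add_one₀ (two_ne_zero (α := ℝ))] at h
    linarith
  have hρmono : ∀ u v a b, u ≠ v → a ≠ b → δ u v ≤ δ a b → ρ u v ≤ ρ a b := by
    intro u v a b huv hab h
    rw [hρdef]
    dsimp only
    rw [if_neg huv, if_neg hab]
    exact zpow_le_zpow_right₀ one_le_two (Int.log_mono_right (hδpos u v huv) h)
  refine ⟨ρ, ?_, ?_, ?_, ?_, ?_⟩
  · intro v w
    rw [hρdef]
    dsimp only
    rw [hδsymm v w]
    by_cases h : v = w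
    · subst h; simp
    · rw [if_neg h, if_neg (Ne.symm h)]
  · intro v; simp [hρdef]
  · -- ultrametric
    intro u v w
    by_cases huw : u = w
    · subst huw
      simp only [hρdef, if_pos rfl]
      exact le_max_of_le_left (hρnonneg u v)
    by_cases huv : u = v
    · subst huv
      exact le_max_of_le_right le_rfl
    by_cases hvw : v = w
    · subst hvw
      exact le_max_of_le_left le_rfl
    · rcases le_total (δ u v) (δ v w) with h | h
      · have : δ u w ≤ δ v w := le_trans (hδultra u v w) (by rw [max_eq_right h])
        exact le_max_of_le_right (hρmono u w v w huw hvw this)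
      · have : δ u w ≤ δ u v := le_trans (hδultra u v w) (by rw [max_eq_left h])
        exact le_max_of_le_left (hρmono u w u v huw huv this)
  · intro v w hvw
    exact ⟨-(Int.log 2 (δ v w)), by rw [hρdef]; dsimp only; rw [if_neg hvw, neg_neg]⟩
  · intro v w hvw
    constructor
    · have h1 : ((2:ℝ) * m + 2)⁻¹ ≤ 1 := by
        rw [inv_le_one_iff₀]
        right
        have : (0:ℝ) ≤ m := Nat.cast_nonneg m
        linarith
      calc ((2:ℝ) * m + 2)⁻¹ * ρ v w ≤ 1 * ρ v w :=
            mul_le_mul_of_nonneg_right h1 (hρnonneg v w)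
        _ = ρ v w := one_mul _
        _ ≤ δ v w := hρle v w hvw
        _ ≤ ‖x v - x w‖ := hδ_le_norm v w
    · calc ‖x v - x w‖ ≤ m * δ v w := hchainbound v w
        _ ≤ m * (2 * ρ v w) := mul_le_mul_of_nonneg_left (hρlt v w hvw) (Nat.cast_nonneg m)
        _ ≤ (2 * m + 2) * ρ v w := by nlinarith [hρnonneg v w, Nat.cast_nonneg (α := ℝ) m]
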